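/- The coefficients (α, β) minimizing E[(α + βᵀX_S − Y_S)²] over α ∈ ℝ, β ∈ ℝ^d are given by β_Pool = E[W_S]⁻¹(cov[α_S, μ_S] + E[W_S β_S]) and α_Pool = E[Y_S] − β_Poolᵀ μ̄, where W_s = Σ_s + μ_s μ_sᵀ − μ̄ μ_sᵀ and μ̄ = E[μ_S]. -/

import Mathlib

open MeasureTheory Matrix Finset

lemma aux_sum_mulVec {ι n' : Type*} [Fintype n'] (t : Finset ι)
    (M : ι → Matrix n' n' ℝ) (v : n' → ℝ) :
    (∑ s ∈ t, M s) *ᵥ v = ∑ s ∈ t, M s *ᵥ v := by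
  ext i
  simp only [Matrix.mulVec, dotProduct, Finset.sum_apply, Matrix.sum_apply, Finset.sum_mul]
  exact Finset.sum_comm

/-- The pooled coefficients `(α_Pool, β_Pool)` minimize the mean squared forecast error
`E[(α + βᵀX_S − Y_S)²]` in the mixture model. -/
theorem stmt0
    {Ω : Type*} [MeasurableSpace Ω] (P : Measure Ω) [IsProbabilityMeasure P]
    (n d : ℕ) (S : Ω → Fin (n + 1)) (hS : Measurable S)
    (X : Ω → Fin d → ℝ) (Y : Ω → ℝ) (ε : Ω → ℝ)
    (p : Fin (n + 1) → ℝ) (μv : Fin (n + 1) → Fin d → ℝ)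
    (Sig : Fin (n + 1) → Matrix (Fin d) (Fin d) ℝ)
    (αb : Fin (n + 1) → ℝ) (βb : Fin (n + 1) → Fin d → ℝ)
    (hp : ∀ s, 0 < p s)
    (hmeas : ∀ s, P {ω | S ω = s} = ENNReal.ofReal (p s))
    (hmean : ∀ s i, ∫ ω in {ω | S ω = s}, X ω i ∂P = p s * μv s i)
    (hcovX : ∀ s i j,
      ∫ ω in {ω | S ω = s}, (X ω i - μv s i) * (X ω j - μv s j) ∂P = p s * Sig s i j)
    (hSigInv : ∀ s, IsUnit (Sig s).det)
    (hY : ∀ ω, Y ω = αb (S ω) + βb (S ω) ⬝ᵥ X ω + ε ω)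
    (hε : ∀ s, ∫ ω in {ω | S ω = s}, ε ω ∂P = 0)
    (hXε : ∀ s i, ∫ ω in {ω | S ω = s}, (X ω i - μv s i) * ε ω ∂P = 0)
    (hint : ∀ (a : ℝ) (b : Fin d → ℝ),
      Integrable (fun ω => (a + b ⬝ᵥ X ω - Y ω) ^ 2) P)
    (μbar : Fin d → ℝ) (hμbar : μbar = ∑ s, p s • μv s)
    (W : Fin (n + 1) → Matrix (Fin d) (Fin d) ℝ)
    (hW : ∀ s, W s = Sig s + Matrix.of (fun i j => μv s i * μv s j)
        - Matrix.of (fun i j => μbar i * μv s j))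
    (hEW : IsUnit (∑ s, p s • W s).det)
    (covαμ : Fin d → ℝ) (hcovαμ : covαμ = ∑ s, (p s * αb s) • (μv s - μbar))
    (βPool : Fin d → ℝ)
    (hβPool : βPool = (∑ s, p s • W s)⁻¹ *ᵥ (covαμ + ∑ s, p s • (W s *ᵥ βb s)))
    (αPool : ℝ) (hαPool : αPool = (∫ ω, Y ω ∂P) - βPool ⬝ᵥ μbar) :
    ∀ (a : ℝ) (b : Fin d → ℝ),
      ∫ ω, (αPool + βPool ⬝ᵥ X ω - Y ω) ^ 2 ∂P ≤ ∫ ω, (a + b ⬝ᵥ X ω - Y ω) ^ 2 ∂P := by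
  intro a b
  set A : Fin (n+1) → Set Ω := fun s => {ω | S ω = s} with hA
  have hAmeas : ∀ s, MeasurableSet (A s) := fun s => hS (measurableSet_singleton s)
  have hAdis : Pairwise (Function.onFun Disjoint A) := by
    intro s t hst
    simp only [Function.onFun, Set.disjoint_left, A, Set.mem_setOf_eq]
    intro ω h1 h2
    exact hst (h1 ▸ h2 ▸ rfl)
  have hPA : ∀ s, (P (A s)).toReal = p s := by
    intro s
    rw [hmeas s, ENNReal.toReal_ofReal (hp s).le]
  have hsplit : ∀ (f : Ω → ℝ), Integrable f P →
      ∫ ω, f ω ∂P = ∑ s, ∫ ω in A s, f ω ∂P := by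
    intro f hf
    rw [← setIntegral_univ]
    have hU : (Set.univ : Set Ω) = ⋃ s ∈ Finset.univ, A s := by
      ext ω; simp [A]
    rw [hU, integral_biUnion_finset _ (fun s _ => hAmeas s)
      (hAdis.set_pairwise _) (fun s _ => hf.integrableOn)]
  -- integrability basics
  have hIlin : ∀ (c : ℝ) (e : Fin d → ℝ), Integrable (fun ω => c + e ⬝ᵥ X ω - Y ω) P := by
    intro c e
    have h2 := (hint (c+1) e).sub (hint c e)
    have heq : (fun ω => c + e ⬝ᵥ X ω - Y ω)
        = fun ω => (((c+1) + e ⬝ᵥ X ω - Y ω)^2 - (c + e ⬝ᵥ X ω - Y ω)^2 - 1) / 2 := by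
      funext ω; ring
    rw [heq]
    exact (h2.sub (integrable_const 1)).div_const 2
  have IY : Integrable Y P := by
    have heq : Y = fun ω => -(0 + (0:Fin d → ℝ) ⬝ᵥ X ω - Y ω) := by
      funext ω; simp
    rw [heq]; exact (hIlin 0 0).neg
  have IbX : ∀ e : Fin d → ℝ, Integrable (fun ω => e ⬝ᵥ X ω) P := by
    intro e
    have heq : (fun ω => e ⬝ᵥ X ω)
        = fun ω => (0 + e ⬝ᵥ X ω - Y ω) - (0 + (0:Fin d → ℝ) ⬝ᵥ X ω - Y ω) := by
      funext ω; simp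
    rw [heq]; exact (hIlin 0 e).sub (hIlin 0 0)
  have IXi : ∀ i, Integrable (fun ω => X ω i) P := by
    intro i
    have := IbX (Pi.single i 1)
    simpa [single_dotProduct] using this
  have Iaff : ∀ (c : ℝ) (e : Fin d → ℝ), Integrable (fun ω => c + e ⬝ᵥ X ω) P :=
    fun c e => (integrable_const c).add (IbX e)
  have IsqY : Integrable (fun ω => Y ω ^ 2) P := by
    have := hint 0 0; simpa using this
  have IsqbX : ∀ e : Fin d → ℝ, Integrable (fun ω => (e ⬝ᵥ X ω)^2) P := by
    intro e
    have h := ((hint 0 (2•e)).sub ((hint 0 e).const_mul 2)).add IsqY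
    have heq : (fun ω => (e ⬝ᵥ X ω)^2)
        = fun ω => (((0 + (2•e) ⬝ᵥ X ω - Y ω)^2 - 2*((0 + e ⬝ᵥ X ω - Y ω)^2)) + Y ω ^2)/2 := by
      funext ω; rw [smul_dotProduct]; push_cast; ring
    rw [heq]
    exact h.div_const 2
  have IsqAff : ∀ (c : ℝ) (e : Fin d → ℝ), Integrable (fun ω => (c + e ⬝ᵥ X ω)^2) P := by
    intro c e
    have h := ((integrable_const (c^2)).add ((IbX e).const_mul (2*c))).add (IsqbX e)
    have heq : (fun ω => (c + e ⬝ᵥ X ω)^2)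
        = fun ω => (c^2 + 2*c*(e ⬝ᵥ X ω)) + (e ⬝ᵥ X ω)^2 := by funext ω; ring
    rw [heq]; exact h
  have Iprod : ∀ (c : ℝ) (e : Fin d → ℝ) (c' : ℝ) (e' : Fin d → ℝ),
      Integrable (fun ω => (c + e ⬝ᵥ X ω) * (c' + e' ⬝ᵥ X ω)) P := by
    intro c e c' e'
    have h := ((IsqAff (c+c') (e+e')).sub (IsqAff c e)).sub (IsqAff c' e')
    have heq : (fun ω => (c + e ⬝ᵥ X ω) * (c' + e' ⬝ᵥ X ω))
        = fun ω => (((c+c') + (e+e') ⬝ᵥ X ω)^2 - (c + e ⬝ᵥ X ω)^2 - (c' + e' ⬝ᵥ X ω)^2)/2 := by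
      funext ω; rw [add_dotProduct]; ring
    rw [heq]; exact h.div_const 2
  have IYaff : ∀ (c : ℝ) (e : Fin d → ℝ), Integrable (fun ω => (c + e ⬝ᵥ X ω) * Y ω) P := by
    intro c e
    have h := ((IsqAff c e).add IsqY).sub (hint c e)
    have heq : (fun ω => (c + e ⬝ᵥ X ω) * Y ω)
        = fun ω => ((c + e ⬝ᵥ X ω)^2 + Y ω^2 - (c + e ⬝ᵥ X ω - Y ω)^2)/2 := by
      funext ω; ring
    rw [heq]; exact h.div_const 2
  have hmean' : ∀ s i, ∫ ω in A s, X ω i ∂P = p s * μv s i := hmean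
  have hcovX' : ∀ s i j,
      ∫ ω in A s, (X ω i - μv s i) * (X ω j - μv s j) ∂P = p s * Sig s i j := hcovX
  have hε' : ∀ s, ∫ ω in A s, ε ω ∂P = 0 := hε
  have hXε' : ∀ s i, ∫ ω in A s, (X ω i - μv s i) * ε ω ∂P = 0 := hXε
  -- fiber computations
  have hCfib : ∀ (c : ℝ) s, ∫ _ω in A s, c ∂P = p s * c := by
    intro c s; rw [setIntegral_const, measureReal_def, hPA, smul_eq_mul]
  have IXiXj : ∀ i j, Integrable (fun ω => X ω i * X ω j) P := by
    intro i j
    have := Iprod 0 (Pi.single i 1) 0 (Pi.single j 1)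
    simpa [single_dotProduct] using this
  have hSymm : ∀ s i j, Sig s i j = Sig s j i := by
    intro s i j
    have h1 := hcovX s i j
    have heq : (fun ω => (X ω i - μv s i) * (X ω j - μv s j))
        = fun ω => (X ω j - μv s j) * (X ω i - μv s i) := by funext ω; ring
    rw [heq, hcovX s j i] at h1
    exact mul_left_cancel₀ (hp s).ne' h1.symm
  have hX2fib : ∀ s i j, ∫ ω in A s, X ω i * X ω j ∂P
      = p s * (Sig s i j + μv s i * μv s j) := by
    intro s i j
    have h := hcovX' s i j
    have I1 : Integrable (fun ω => μv s i * X ω j) P := (IXi j).const_mul _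
    have I2 : Integrable (fun ω => μv s j * X ω i) P := (IXi i).const_mul _
    have I3 : Integrable (fun ω => μv s j * X ω i - μv s i * μv s j) P :=
      I2.sub (integrable_const _)
    have I4 : Integrable (fun ω => μv s i * X ω j + (μv s j * X ω i - μv s i * μv s j)) P :=
      I1.add I3
    have heq : (fun ω => (X ω i - μv s i) * (X ω j - μv s j))
        = fun ω => X ω i * X ω j
          - (μv s i * X ω j + (μv s j * X ω i - μv s i * μv s j)) := by
      funext ω; ring
    rw [heq, integral_sub ((IXiXj i j).integrableOn) I4.integrableOn,
      integral_add I1.integrableOn I3.integrableOn,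
      integral_sub I2.integrableOn ((integrable_const _).integrableOn),
      integral_const_mul, integral_const_mul, hmean', hmean', hCfib] at h
    nlinarith [h]
  have Iε_on : ∀ s, IntegrableOn ε (A s) P := by
    intro s
    refine ((IY.sub (Iaff (αb s) (βb s))).integrableOn).congr_fun ?_ (hAmeas s)
    intro ω hω
    show Y ω - (αb s + βb s ⬝ᵥ X ω) = ε ω
    rw [hY ω, show S ω = s from hω]; ring
  have IεX_on : ∀ s i, IntegrableOn (fun ω => (X ω i - μv s i) * ε ω) (A s) P := by
    intro s i
    have Ig : Integrable (fun ω => (X ω i - μv s i) * (Y ω - (αb s + βb s ⬝ᵥ X ω))) P := by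
      have Ia : Integrable (fun ω => ((-μv s i) + (Pi.single i 1) ⬝ᵥ X ω) * Y ω) P :=
        IYaff _ _
      have Ib : Integrable
          (fun ω => ((-μv s i) + (Pi.single i 1) ⬝ᵥ X ω) * (αb s + βb s ⬝ᵥ X ω)) P :=
        Iprod _ _ _ _
      have heq : (fun ω => (X ω i - μv s i) * (Y ω - (αb s + βb s ⬝ᵥ X ω)))
          = fun ω => ((-μv s i) + (Pi.single i 1) ⬝ᵥ X ω) * Y ω
            - ((-μv s i) + (Pi.single i 1) ⬝ᵥ X ω) * (αb s + βb s ⬝ᵥ X ω) := by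
        funext ω; simp only [single_dotProduct, one_mul]; ring
      rw [heq]; exact Ia.sub Ib
    refine (Ig.integrableOn).congr_fun ?_ (hAmeas s)
    intro ω hω
    show (X ω i - μv s i) * (Y ω - (αb s + βb s ⬝ᵥ X ω)) = (X ω i - μv s i) * ε ω
    rw [hY ω, show S ω = s from hω]; ring
  have hεXfib : ∀ s i, ∫ ω in A s, ε ω * X ω i ∂P = 0 := by
    intro s i
    have heq : (fun ω => ε ω * X ω i)
        = fun ω => (X ω i - μv s i) * ε ω + μv s i * ε ω := by funext ω; ring
    rw [heq, integral_add (IεX_on s i) ((Iε_on s).const_mul _), integral_const_mul,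
      hXε' s i, hε' s, mul_zero, add_zero]
  have hbXfib : ∀ s (e : Fin d → ℝ), ∫ ω in A s, e ⬝ᵥ X ω ∂P = p s * (e ⬝ᵥ μv s) := by
    intro s e
    have heq : (fun ω => e ⬝ᵥ X ω) = fun ω => ∑ j, e j * X ω j := by
      funext ω; rfl
    rw [heq, integral_finset_sum _ (fun j _ => ((IXi j).const_mul _).integrableOn)]
    have h2 : ∀ j ∈ Finset.univ, ∫ ω in A s, e j * X ω j ∂P = p s * (e j * μv s j) := by
      intro j _; rw [integral_const_mul, hmean']; ring
    rw [Finset.sum_congr rfl h2, ← Finset.mul_sum]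
    rfl
  have hYfib : ∀ s, ∫ ω in A s, Y ω ∂P = p s * (αb s + βb s ⬝ᵥ μv s) := by
    intro s
    rw [setIntegral_congr_fun (hAmeas s)
        (g := fun ω => αb s + βb s ⬝ᵥ X ω + ε ω)
        (fun ω hω => by show Y ω = _; rw [hY ω, show S ω = s from hω]),
      integral_add ((Iaff (αb s) (βb s)).integrableOn) (Iε_on s), hε' s, add_zero,
      integral_add ((integrable_const _).integrableOn) ((IbX (βb s)).integrableOn),
      hCfib, hbXfib]
    ring
  have hYXfib : ∀ s i, ∫ ω in A s, Y ω * X ω i ∂P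
      = p s * (αb s * μv s i) + ∑ j, βb s j * (p s * (Sig s j i + μv s j * μv s i)) := by
    intro s i
    have Isum : Integrable (fun ω => ∑ j, βb s j * (X ω j * X ω i)) P :=
      integrable_finset_sum _ (fun j _ => (IXiXj j i).const_mul _)
    have I1 : Integrable (fun ω => αb s * X ω i + ∑ j, βb s j * (X ω j * X ω i)) P :=
      ((IXi i).const_mul _).add Isum
    have I2 : IntegrableOn (fun ω => ε ω * X ω i) (A s) P := by
      have heq : (fun ω => ε ω * X ω i)
          = fun ω => (X ω i - μv s i) * ε ω + μv s i * ε ω := by funext ω; ring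
      rw [heq]; exact (IεX_on s i).add ((Iε_on s).const_mul _)
    rw [setIntegral_congr_fun (hAmeas s)
        (g := fun ω => (αb s * X ω i + ∑ j, βb s j * (X ω j * X ω i)) + ε ω * X ω i)
        (fun ω hω => by
          show Y ω * X ω i = _
          rw [hY ω, show S ω = s from hω]
          show _ = αb s * X ω i + (∑ j, βb s j * (X ω j * X ω i)) + ε ω * X ω i
          have hdp : (βb s ⬝ᵥ X ω) * X ω i = ∑ j, βb s j * (X ω j * X ω i) := by
            rw [show βb s ⬝ᵥ X ω = ∑ j, βb s j * X ω j from rfl, Finset.sum_mul]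
            exact Finset.sum_congr rfl fun j _ => by ring
          rw [← hdp]; ring),
      integral_add I1.integrableOn I2, hεXfib s i, add_zero,
      integral_add (((IXi i).const_mul _).integrableOn) Isum.integrableOn,
      integral_const_mul, hmean',
      integral_finset_sum _ (fun j _ => ((IXiXj j i).const_mul _).integrableOn)]
    congr 1
    · ring
    · exact Finset.sum_congr rfl fun j _ => by rw [integral_const_mul, hX2fib]
  -- global moments
  have hμbari : ∀ i, μbar i = ∑ s, p s * μv s i := by
    intro i; rw [hμbar]; simp [Finset.sum_apply]
  have EX : ∀ i, ∫ ω, X ω i ∂P = μbar i := by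
    intro i
    rw [hsplit _ (IXi i), hμbari]
    exact Finset.sum_congr rfl fun s _ => hmean' s i
  have EX2 : ∀ i j, ∫ ω, X ω i * X ω j ∂P = ∑ s, p s * (Sig s i j + μv s i * μv s j) := by
    intro i j
    rw [hsplit _ (IXiXj i j)]
    exact Finset.sum_congr rfl fun s _ => hX2fib s i j
  have EY : ∫ ω, Y ω ∂P = ∑ s, p s * (αb s + βb s ⬝ᵥ μv s) := by
    rw [hsplit _ IY]; exact Finset.sum_congr rfl fun s _ => hYfib s
  have IYX : ∀ i, Integrable (fun ω => Y ω * X ω i) P := by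
    intro i
    have h := IYaff 0 (Pi.single i 1)
    have heq : (fun ω => Y ω * X ω i) = fun ω => (0 + Pi.single i 1 ⬝ᵥ X ω) * Y ω := by
      funext ω; simp only [single_dotProduct, one_mul, zero_add]; ring
    rw [heq]; exact h
  have EYX : ∀ i, ∫ ω, Y ω * X ω i ∂P
      = ∑ s, (p s * (αb s * μv s i)
          + ∑ j, βb s j * (p s * (Sig s j i + μv s j * μv s i))) := by
    intro i
    rw [hsplit _ (IYX i)]
    exact Finset.sum_congr rfl fun s _ => hYXfib s i
  have EbX : ∀ e : Fin d → ℝ, ∫ ω, e ⬝ᵥ X ω ∂P = e ⬝ᵥ μbar := by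
    intro e
    have heq : (fun ω => e ⬝ᵥ X ω) = fun ω => ∑ j, e j * X ω j := rfl
    rw [heq, integral_finset_sum _ (fun j _ => (IXi j).const_mul _),
      show e ⬝ᵥ μbar = ∑ j, e j * μbar j from rfl]
    exact Finset.sum_congr rfl fun j _ => by rw [integral_const_mul, EX]
  -- key equation from the definition of βPool
  have hMβ : (∑ s, p s • W s) *ᵥ βPool = covαμ + ∑ s, p s • (W s *ᵥ βb s) := by
    rw [hβPool, Matrix.mulVec_mulVec, Matrix.mul_nonsing_inv _ hEW, Matrix.one_mulVec]
  have KE : ∀ i, (∑ s, p s * ((W s *ᵥ βPool) i))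
      = covαμ i + ∑ s, p s * ((W s *ᵥ βb s) i) := by
    intro i
    have h := congrFun hMβ i
    rw [aux_sum_mulVec] at h
    simp only [Matrix.smul_mulVec] at h
    simpa [Finset.sum_apply, Pi.add_apply, Pi.smul_apply, smul_eq_mul] using h
  have hWv : ∀ s (v : Fin d → ℝ) i, (W s *ᵥ v) i
      = ∑ j, (Sig s i j + μv s i * μv s j - μbar i * μv s j) * v j := by
    intro s v i
    simp only [Matrix.mulVec, dotProduct, hW s, Matrix.sub_apply, Matrix.add_apply,
      Matrix.of_apply]
  have hcov_i : ∀ i, covαμ i = ∑ s, p s * αb s * (μv s i - μbar i) := by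
    intro i; rw [hcovαμ]; simp [Finset.sum_apply]
  -- normal equations
  have NE0 : ∫ ω, (αPool + βPool ⬝ᵥ X ω - Y ω) ∂P = 0 := by
    have h1 : ∫ ω, (αPool + βPool ⬝ᵥ X ω - Y ω) ∂P
        = (∫ ω, (αPool + βPool ⬝ᵥ X ω) ∂P) - ∫ ω, Y ω ∂P :=
      integral_sub (Iaff _ _) IY
    have h2 : ∫ ω, (αPool + βPool ⬝ᵥ X ω) ∂P
        = (∫ _ω, αPool ∂P) + ∫ ω, βPool ⬝ᵥ X ω ∂P :=
      integral_add (integrable_const _) (IbX _)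
    rw [h1, h2, integral_const, EbX]
    simp only [measureReal_def, measure_univ, ENNReal.toReal_one, one_smul, smul_eq_mul]
    rw [hαPool]; ring
  have IRX : ∀ i, Integrable (fun ω => (αPool + βPool ⬝ᵥ X ω - Y ω) * X ω i) P := by
    intro i
    have Ia : Integrable
        (fun ω => (αPool + βPool ⬝ᵥ X ω) * (0 + Pi.single i 1 ⬝ᵥ X ω)) P := Iprod _ _ _ _
    have Ib : Integrable (fun ω => (0 + Pi.single i 1 ⬝ᵥ X ω) * Y ω) P := IYaff _ _
    have heq : (fun ω => (αPool + βPool ⬝ᵥ X ω - Y ω) * X ω i)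
        = fun ω => (αPool + βPool ⬝ᵥ X ω) * (0 + Pi.single i 1 ⬝ᵥ X ω)
          - (0 + Pi.single i 1 ⬝ᵥ X ω) * Y ω := by
      funext ω; simp only [single_dotProduct, one_mul, zero_add]; ring
    rw [heq]; exact Ia.sub Ib
  have NE1 : ∀ i, ∫ ω, (αPool + βPool ⬝ᵥ X ω - Y ω) * X ω i ∂P = 0 := by
    intro i
    have Isum : Integrable (fun ω => ∑ j, βPool j * (X ω j * X ω i)) P :=
      integrable_finset_sum _ (fun j _ => (IXiXj j i).const_mul _)
    have heq : (fun ω => (αPool + βPool ⬝ᵥ X ω - Y ω) * X ω i)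
        = fun ω => (αPool * X ω i + ∑ j, βPool j * (X ω j * X ω i)) - Y ω * X ω i := by
      funext ω
      have hdp : (βPool ⬝ᵥ X ω) * X ω i = ∑ j, βPool j * (X ω j * X ω i) := by
        rw [show βPool ⬝ᵥ X ω = ∑ j, βPool j * X ω j from rfl, Finset.sum_mul]
        exact Finset.sum_congr rfl fun j _ => by ring
      rw [← hdp]; ring
    have I5 : Integrable (fun ω => αPool * X ω i + ∑ j, βPool j * (X ω j * X ω i)) P :=
      ((IXi i).const_mul _).add Isum
    rw [heq, integral_sub I5 (IYX i),
      integral_add ((IXi i).const_mul αPool) Isum, integral_const_mul, EX,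
      integral_finset_sum _ (fun j _ => (IXiXj j i).const_mul _),
      Finset.sum_congr rfl (fun j _ => by rw [integral_const_mul, EX2] :
        ∀ j ∈ Finset.univ, ∫ ω, βPool j * (X ω j * X ω i) ∂P
          = βPool j * ∑ s, p s * (Sig s j i + μv s j * μv s i)),
      EYX i, hαPool, EY]
    -- now pure algebra
    have e1 : βPool ⬝ᵥ μbar = ∑ s, p s * (∑ k, βPool k * μv s k) := by
      rw [show βPool ⬝ᵥ μbar = ∑ k, βPool k * μbar k from rfl]
      simp_rw [hμbari, Finset.mul_sum]
      rw [Finset.sum_comm]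
      exact Finset.sum_congr rfl fun s _ => Finset.sum_congr rfl fun k _ => by ring
    have e2 : (∑ j, βPool j * (∑ s, p s * (Sig s j i + μv s j * μv s i)))
        = ∑ s, p s * (∑ j, βPool j * (Sig s j i + μv s j * μv s i)) := by
      simp_rw [Finset.mul_sum]
      rw [Finset.sum_comm]
      exact Finset.sum_congr rfl fun s _ => Finset.sum_congr rfl fun j _ => by ring
    rw [e1, e2]
    have KE' := KE i
    simp_rw [hWv, hcov_i] at KE'
    -- rearrange goal into a single sum over s
    have g1 : ∀ s (u : Fin d → ℝ), (∑ j, u j * (Sig s j i + μv s j * μv s i))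
        = (∑ j, u j * Sig s i j) + (∑ j, u j * μv s j) * μv s i := by
      intro s u
      rw [Finset.sum_mul, ← Finset.sum_add_distrib]
      exact Finset.sum_congr rfl fun j _ => by rw [hSymm s j i]; ring
    have g2 : ∀ s (u : Fin d → ℝ),
        (∑ j, (Sig s i j + μv s i * μv s j - μbar i * μv s j) * u j)
        = ((∑ j, u j * Sig s i j) + (∑ j, u j * μv s j) * μv s i)
          - (∑ j, u j * μv s j) * μbar i := by
      intro s u
      rw [Finset.sum_mul, Finset.sum_mul, ← Finset.sum_add_distrib, ← Finset.sum_sub_distrib]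
      exact Finset.sum_congr rfl fun j _ => by ring
    have g3 : ∀ s, (∑ j, βb s j * (p s * (Sig s j i + μv s j * μv s i)))
        = p s * ((∑ j, βb s j * Sig s i j) + (∑ j, βb s j * μv s j) * μv s i) := by
      intro s
      rw [← g1 s (βb s), Finset.mul_sum]
      exact Finset.sum_congr rfl fun j _ => by ring
    simp_rw [g2] at KE'
    simp_rw [g3, g1]
    simp only [dotProduct]
    have KE2 := sub_eq_zero.mpr KE'
    rw [← Finset.sum_add_distrib, ← Finset.sum_sub_distrib] at KE2
    rw [sub_mul, Finset.sum_mul, Finset.sum_mul, ← Finset.sum_sub_distrib,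
      ← Finset.sum_add_distrib, ← Finset.sum_sub_distrib]
    refine Eq.trans (Finset.sum_congr rfl fun s _ => ?_) KE2
    ring
  -- final assembly
  have hcross : Integrable (fun ω =>
      (αPool + βPool ⬝ᵥ X ω - Y ω) * ((a - αPool) + (b - βPool) ⬝ᵥ X ω)) P := by
    have I6 : Integrable (fun ω => (a - αPool) * (αPool + βPool ⬝ᵥ X ω - Y ω)
        + ∑ i, (b - βPool) i * ((αPool + βPool ⬝ᵥ X ω - Y ω) * X ω i)) P :=
      ((hIlin αPool βPool).const_mul _).add
        (integrable_finset_sum _ (fun i _ => (IRX i).const_mul _))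
    have heq : (fun ω => (αPool + βPool ⬝ᵥ X ω - Y ω) * ((a - αPool) + (b - βPool) ⬝ᵥ X ω))
        = fun ω => (a - αPool) * (αPool + βPool ⬝ᵥ X ω - Y ω)
          + ∑ i, (b - βPool) i * ((αPool + βPool ⬝ᵥ X ω - Y ω) * X ω i) := by
      funext ω
      have hdp : (αPool + βPool ⬝ᵥ X ω - Y ω) * ((b - βPool) ⬝ᵥ X ω)
          = ∑ i, (b - βPool) i * ((αPool + βPool ⬝ᵥ X ω - Y ω) * X ω i) := by
        rw [show (b - βPool) ⬝ᵥ X ω = ∑ i, (b - βPool) i * X ω i from rfl, Finset.mul_sum]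
        exact Finset.sum_congr rfl fun i _ => by ring
      rw [← hdp]; ring
    rw [heq]; exact I6
  have hcross0 : ∫ ω, (αPool + βPool ⬝ᵥ X ω - Y ω) * ((a - αPool) + (b - βPool) ⬝ᵥ X ω) ∂P
      = 0 := by
    have heq : (fun ω => (αPool + βPool ⬝ᵥ X ω - Y ω) * ((a - αPool) + (b - βPool) ⬝ᵥ X ω))
        = fun ω => (a - αPool) * (αPool + βPool ⬝ᵥ X ω - Y ω)
          + ∑ i, (b - βPool) i * ((αPool + βPool ⬝ᵥ X ω - Y ω) * X ω i) := by
      funext ω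
      have hdp : (αPool + βPool ⬝ᵥ X ω - Y ω) * ((b - βPool) ⬝ᵥ X ω)
          = ∑ i, (b - βPool) i * ((αPool + βPool ⬝ᵥ X ω - Y ω) * X ω i) := by
        rw [show (b - βPool) ⬝ᵥ X ω = ∑ i, (b - βPool) i * X ω i from rfl, Finset.mul_sum]
        exact Finset.sum_congr rfl fun i _ => by ring
      rw [← hdp]; ring
    rw [heq, integral_add ((hIlin αPool βPool).const_mul _)
        (integrable_finset_sum _ (fun i _ => (IRX i).const_mul _)),
      integral_const_mul, NE0, mul_zero, zero_add,
      integral_finset_sum _ (fun i _ => (IRX i).const_mul _)]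
    rw [Finset.sum_congr rfl (fun i _ => by rw [integral_const_mul, NE1 i, mul_zero] :
      ∀ i ∈ Finset.univ, ∫ ω, (b - βPool) i * ((αPool + βPool ⬝ᵥ X ω - Y ω) * X ω i) ∂P
        = 0)]
    simp
  have hDsq : Integrable (fun ω => ((a - αPool) + (b - βPool) ⬝ᵥ X ω) ^ 2) P :=
    IsqAff _ _
  have key : ∫ ω, (a + b ⬝ᵥ X ω - Y ω) ^ 2 ∂P
      = (∫ ω, (αPool + βPool ⬝ᵥ X ω - Y ω) ^ 2 ∂P)
        + ((2 : ℝ) * ∫ ω, (αPool + βPool ⬝ᵥ X ω - Y ω)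
              * ((a - αPool) + (b - βPool) ⬝ᵥ X ω) ∂P
          + ∫ ω, ((a - αPool) + (b - βPool) ⬝ᵥ X ω) ^ 2 ∂P) := by
    have heq : (fun ω => (a + b ⬝ᵥ X ω - Y ω) ^ 2)
        = fun ω => (αPool + βPool ⬝ᵥ X ω - Y ω) ^ 2
          + (2 * ((αPool + βPool ⬝ᵥ X ω - Y ω) * ((a - αPool) + (b - βPool) ⬝ᵥ X ω))
            + ((a - αPool) + (b - βPool) ⬝ᵥ X ω) ^ 2) := by
      funext ω
      rw [show (b - βPool) ⬝ᵥ X ω = b ⬝ᵥ X ω - βPool ⬝ᵥ X ω from sub_dotProduct b βPool (X ω)]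
      ring
    have I7 : Integrable (fun ω =>
        2 * ((αPool + βPool ⬝ᵥ X ω - Y ω) * ((a - αPool) + (b - βPool) ⬝ᵥ X ω))
          + ((a - αPool) + (b - βPool) ⬝ᵥ X ω) ^ 2) P :=
      (hcross.const_mul 2).add hDsq
    rw [heq, integral_add (hint αPool βPool) I7,
      integral_add (hcross.const_mul 2) hDsq, integral_const_mul]
  rw [key, hcross0, mul_zero, zero_add]
  have hnn : 0 ≤ ∫ ω, ((a - αPool) + (b - βPool) ⬝ᵥ X ω) ^ 2 ∂P :=
    integral_nonneg fun ω => sq_nonneg _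
  linarith
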